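/- Let d ≥ 3 be an integer and s = (s_0,…,s_d) ∈ ℂ^{d+1} with s_j ≠ 0 for some j ≤ d−1. Define on ℂ: p(z) = Σ_{j=0}^{d−1} C(d−1,j) s_{j+1} z^{j}, q(z) = Σ_{j=0}^{d−1} C(d−1,j) s_j z^{j}, u(z) = Σ_{j=0}^{d−1} C(d−1,j) conj(s_{j+1}) p(z)^{j} q(z)^{d−1−j}, v(z) = Σ_{j=0}^{d−1} C(d−1,j) conj(s_j) p(z)^{j} q(z)^{d−1−j}, and f_s(x₀,x₁) = Σ_{j=0}^{d} C(d,j) s_j x₀^{d−j} x₁^{j}. Assume there exists w ∈ ℂ with w·v(w) ≠ u(w). Then sSup{ |f_s(x₀,x₁)| : (x₀,x₁) ∈ ℂ², |x₀|² + |x₁|² = 1 } = sSup( {|s_d|} ∪ { |q(z)| · (1 + |z|²)^{−(d−2)/2} : z ∈ ℂ, conj(z)·q(z) = p(z) } ). -/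

import Mathlib

open Complex Finset

lemma aux_curve (G : ℂ → ℂ) (G' z₀ c : ℂ) (hG : HasDerivAt G G' z₀) :
    HasDerivAt (fun t : ℝ => G (z₀ + ↑t * c)) (c * G') 0 := by
  have h1 : HasDerivAt (fun t : ℝ => (t : ℂ)) 1 (0:ℝ) := by
    exact Complex.ofRealCLM.hasDerivAt (x := (0:ℝ))
  have h2 : HasDerivAt (fun t : ℝ => z₀ + ↑t * c) c 0 := by
    simpa using (h1.mul_const c).const_add z₀
  have h3 : HasDerivAt G G' (z₀ + ((0:ℝ):ℂ) * c) := by simpa using hG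
  exact h3.scomp (0:ℝ) h2

lemma aux_normSq_deriv (G : ℂ → ℂ) (G' z₀ c : ℂ) (hG : HasDerivAt G G' z₀) :
    HasDerivAt (fun t : ℝ => Complex.normSq (G (z₀ + ↑t * c)))
      (2 * ((starRingEnd ℂ) (G z₀) * (c * G')).re) 0 := by
  have hψ := aux_curve G G' z₀ c hG
  have hre : HasDerivAt (fun t : ℝ => (G (z₀ + ↑t * c)).re) (c * G').re 0 :=
    Complex.reCLM.hasFDerivAt.comp_hasDerivAt 0 hψ
  have him : HasDerivAt (fun t : ℝ => (G (z₀ + ↑t * c)).im) (c * G').im 0 :=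
    Complex.imCLM.hasFDerivAt.comp_hasDerivAt 0 hψ
  have h := (hre.mul hre).add (him.mul him)
  have heq : (fun t : ℝ => Complex.normSq (G (z₀ + ↑t * c))) =
      fun t : ℝ => (G (z₀ + ↑t * c)).re * (G (z₀ + ↑t * c)).re +
        (G (z₀ + ↑t * c)).im * (G (z₀ + ↑t * c)).im := by
    funext t; rw [Complex.normSq_apply]
  rw [heq]
  refine h.congr_deriv ?_
  simp [Complex.mul_re, Complex.conj_re, Complex.conj_im]
  ring

lemma aux_gpq (e : ℕ) (a : ℕ → ℂ) (z : ℂ) :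
    ∑ j ∈ range (e + 2), ((e+1).choose j : ℂ) * a j * z ^ j
      = (∑ j ∈ range (e+1), (e.choose j : ℂ) * a j * z ^ j)
        + z * ∑ j ∈ range (e+1), (e.choose j : ℂ) * a (j+1) * z ^ j := by
  rw [Finset.sum_range_succ' (fun j => ((e+1).choose j : ℂ) * a j * z ^ j) (e+1)]
  rw [Finset.sum_range_succ' (fun j => (e.choose j : ℂ) * a j * z ^ j) e]
  have h1 : ∀ j, (((e+1).choose (j+1) : ℂ)) = (e.choose j : ℂ) + (e.choose (j+1) : ℂ) := by
    intro j; rw [Nat.choose_succ_succ]; push_cast; ring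
  have h2 : ∑ j ∈ range (e+1), ((e+1).choose (j+1) : ℂ) * a (j+1) * z ^ (j+1)
      = (∑ j ∈ range (e+1), (e.choose j : ℂ) * a (j+1) * z ^ (j+1))
        + ∑ j ∈ range (e+1), (e.choose (j+1) : ℂ) * a (j+1) * z ^ (j+1) := by
    rw [← Finset.sum_add_distrib]
    exact Finset.sum_congr rfl fun j _ => by rw [h1]; ring
  have h3 : ∑ j ∈ range (e+1), (e.choose (j+1) : ℂ) * a (j+1) * z ^ (j+1)
      = ∑ j ∈ range e, (e.choose (j+1) : ℂ) * a (j+1) * z ^ (j+1) := by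
    rw [Finset.sum_range_succ, Nat.choose_succ_self]; simp
  have h4 : z * ∑ j ∈ range (e+1), (e.choose j : ℂ) * a (j+1) * z ^ j
      = ∑ j ∈ range (e+1), (e.choose j : ℂ) * a (j+1) * z ^ (j+1) := by
    rw [Finset.mul_sum]; exact Finset.sum_congr rfl fun j _ => by ring
  simp only [h2, h3, h4, Nat.choose_zero_right]
  push_cast
  ring

lemma aux_gderiv (e : ℕ) (a : ℕ → ℂ) (z : ℂ) :
    ∑ j ∈ range (e + 2), ((e+1).choose j : ℂ) * a j * ((j : ℂ) * z ^ (j-1))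
      = ((e:ℂ)+1) * ∑ j ∈ range (e+1), (e.choose j : ℂ) * a (j+1) * z ^ j := by
  rw [Finset.sum_range_succ' (fun j => ((e+1).choose j : ℂ) * a j * ((j:ℂ) * z ^ (j-1))) (e+1)]
  rw [Finset.mul_sum]
  simp only [Nat.cast_zero, zero_mul, mul_zero, add_zero, Nat.add_sub_cancel]
  refine Finset.sum_congr rfl fun j _ => ?_
  have h : ((e:ℂ)+1) * (e.choose j : ℂ) = ((e+1).choose (j+1) : ℂ) * ((j:ℂ)+1) := by
    have h0 := Nat.add_one_mul_choose_eq e j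
    have h1 : ((Nat.succ e * e.choose j : ℕ) : ℂ) = (((e+1).choose (j+1) * (j+1) : ℕ) : ℂ) := by
      rw [h0]
    push_cast at h1
    linear_combination h1
  push_cast
  linear_combination (-(a (j+1) * z ^ j)) * h

set_option maxHeartbeats 1000000 in
/-- Outside the exceptional family, the spectral norm of a symmetric
d-qubit equals the max of |s_d| and |q(z)|(1+|z|²)^{−(d−2)/2} over the anti-fixed
points z (conj(z)q(z) = p(z)). -/
theorem stmt_15 (d : ℕ) (hd : 3 ≤ d) (s : Fin (d + 1) → ℂ)
    (hs : ∃ j : Fin (d + 1), (j : ℕ) ≤ d - 1 ∧ s j ≠ 0)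
    (p q u v : ℂ → ℂ)
    (hp : ∀ z, p z = ∑ j : Fin d, ((d - 1).choose j : ℂ) * s j.succ * z ^ (j : ℕ))
    (hq : ∀ z, q z = ∑ j : Fin d, ((d - 1).choose j : ℂ) * s j.castSucc * z ^ (j : ℕ))
    (hu : ∀ z, u z = ∑ j : Fin d, ((d - 1).choose j : ℂ) * (starRingEnd ℂ) (s j.succ) *
        p z ^ (j : ℕ) * q z ^ (d - 1 - (j : ℕ)))
    (hv : ∀ z, v z = ∑ j : Fin d, ((d - 1).choose j : ℂ) * (starRingEnd ℂ) (s j.castSucc) *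
        p z ^ (j : ℕ) * q z ^ (d - 1 - (j : ℕ)))
    (hexc : ∃ w : ℂ, w * v w ≠ u w) :
    sSup {r : ℝ | ∃ x₀ x₁ : ℂ, ‖x₀‖ ^ 2 + ‖x₁‖ ^ 2 = 1 ∧
        r = ‖∑ j : Fin (d + 1), (d.choose j : ℂ) * s j *
          x₀ ^ (d - (j : ℕ)) * x₁ ^ (j : ℕ)‖} =
    sSup ({‖s (Fin.last d)‖} ∪
      {r : ℝ | ∃ z : ℂ, (starRingEnd ℂ) z * q z = p z ∧
        r = ‖q z‖ * (1 + ‖z‖ ^ 2) ^ (-(((d : ℝ) - 2) / 2))}) := by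
  clear hu hv hexc
  -- basic notation
  set T1 : Set ℝ := {r : ℝ | ∃ x₀ x₁ : ℂ, ‖x₀‖ ^ 2 + ‖x₁‖ ^ 2 = 1 ∧
        r = ‖∑ j : Fin (d + 1), (d.choose j : ℂ) * s j *
          x₀ ^ (d - (j : ℕ)) * x₁ ^ (j : ℕ)‖} with hT1
  set T2 : Set ℝ := ({‖s (Fin.last d)‖} ∪
      {r : ℝ | ∃ z : ℂ, (starRingEnd ℂ) z * q z = p z ∧
        r = ‖q z‖ * (1 + ‖z‖ ^ 2) ^ (-(((d : ℝ) - 2) / 2))}) with hT2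
  obtain ⟨e, rfl⟩ : ∃ e, d = e + 1 := ⟨d - 1, by omega⟩
  simp only [Nat.add_sub_cancel] at hp hq hs ⊢
  -- coefficients as a ℕ-indexed function
  set s' : ℕ → ℂ := fun k => if h : k < e + 2 then s ⟨k, h⟩ else 0 with hs'
  have hs'' : ∀ j : Fin (e+2), s j = s' (j : ℕ) := by
    intro j
    simp only [hs', j.isLt, dif_pos, Fin.eta]
  set g : ℂ → ℂ := fun z => ∑ j ∈ range (e+2), ((e+1).choose j : ℂ) * s' j * z ^ j with hg
  -- conversions of p, q to range sums
  have hp' : ∀ z, p z = ∑ j ∈ range (e+1), (e.choose j : ℂ) * s' (j+1) * z ^ j := by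
    intro z
    rw [hp z]
    rw [← Fin.sum_univ_eq_sum_range (fun j => (e.choose j : ℂ) * s' (j+1) * z ^ j) (e+1)]
    refine Finset.sum_congr rfl fun j _ => ?_
    rw [hs'' j.succ]
    rfl
  have hq' : ∀ z, q z = ∑ j ∈ range (e+1), (e.choose j : ℂ) * s' j * z ^ j := by
    intro z
    rw [hq z]
    rw [← Fin.sum_univ_eq_sum_range (fun j => (e.choose j : ℂ) * s' j * z ^ j) (e+1)]
    refine Finset.sum_congr rfl fun j _ => ?_
    rw [hs'' j.castSucc]
    rfl
  -- conversion of the main sum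
  have hfin : ∀ x₀ x₁ : ℂ, ∑ j : Fin (e + 1 + 1), ((e+1).choose j : ℂ) * s j *
          x₀ ^ (e + 1 - (j : ℕ)) * x₁ ^ (j : ℕ)
      = ∑ j ∈ range (e+2), ((e+1).choose j : ℂ) * s' j * x₀ ^ (e + 1 - j) * x₁ ^ j := by
    intro x₀ x₁
    rw [← Fin.sum_univ_eq_sum_range (fun j => ((e+1).choose j : ℂ) * s' j * x₀ ^ (e + 1 - j) * x₁ ^ j)
      (e+2)]
    exact Finset.sum_congr rfl fun j _ => by rw [hs'' j]
  -- g = q + z p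
  have hgpq : ∀ z, g z = q z + z * p z := by
    intro z
    rw [hp' z, hq' z, hg]
    exact aux_gpq e s' z
  -- derivative of g
  have hgd : ∀ z, HasDerivAt g (((e:ℂ)+1) * p z) z := by
    intro z
    have h1 : HasDerivAt g (∑ j ∈ range (e+2), ((e+1).choose j : ℂ) * s' j * ((j:ℂ) * z ^ (j-1))) z := by
      apply HasDerivAt.fun_sum
      intro j _
      exact (hasDerivAt_pow j z).const_mul _
    convert h1 using 1
    rw [aux_gderiv e s' z, hp' z]
  -- factorization of the value along slope w
  have hsum : ∀ a w : ℂ, ∑ j : Fin (e + 1 + 1), ((e+1).choose j : ℂ) * s j *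
          a ^ (e + 1 - (j : ℕ)) * (w * a) ^ (j : ℕ) = a ^ (e+1) * g w := by
    intro a w
    rw [hfin, hg, Finset.mul_sum]
    refine Finset.sum_congr rfl fun j hj => ?_
    have hjd : j ≤ e + 1 := by simpa using Nat.lt_succ_iff.mp (Finset.mem_range.mp hj)
    have hj' : e + 1 - j + j = e + 1 := Nat.sub_add_cancel hjd
    calc ((e+1).choose j : ℂ) * s' j * a ^ (e + 1 - j) * (w * a) ^ j
        = ((e+1).choose j : ℂ) * s' j * w ^ j * (a ^ (e+1-j) * a ^ j) := by rw [mul_pow]; ring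
      _ = a ^ (e+1) * (((e+1).choose j : ℂ) * s' j * w ^ j) := by rw [← pow_add, hj']; ring
  -- value at x₀ = 0
  have hzero : ∀ b : ℂ, ∑ j : Fin (e + 1 + 1), ((e+1).choose j : ℂ) * s j *
          (0:ℂ) ^ (e + 1 - (j : ℕ)) * b ^ (j : ℕ) = s (Fin.last (e+1)) * b ^ (e+1) := by
    intro b
    rw [Finset.sum_eq_single (Fin.last (e+1))]
    · simp [Fin.last]
    · intro j _ hj
      have hjlt : (j : ℕ) < e + 1 := by
        rcases Fin.lt_last_iff_ne_last.mpr hj with h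
        exact h
      have : (0:ℂ) ^ (e + 1 - (j:ℕ)) = 0 := by
        apply zero_pow
        omega
      rw [this]; ring
    · simp
  -- real weight functions
  set A : ℂ → ℝ := fun w => 1 + ‖w‖ ^ 2 with hA_def
  have hA : ∀ w, 0 < A w := fun w => by positivity
  set α : ℂ → ℝ := fun w => A w ^ (-(1:ℝ)/2) with hα_def
  have hα : ∀ w, 0 < α w := fun w => Real.rpow_pos_of_pos (hA w) _
  have hα2 : ∀ w, α w ^ 2 = (A w)⁻¹ := by
    intro w
    rw [hα_def]
    rw [← Real.rpow_natCast (A w ^ (-(1:ℝ)/2)) 2, ← Real.rpow_mul (hA w).le]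
    norm_num [Real.rpow_neg_one]
  -- sphere point realizing slope w
  have hval : ∀ w : ℂ, ∃ x₀ x₁ : ℂ, ‖x₀‖ ^ 2 + ‖x₁‖ ^ 2 = 1 ∧
      ‖∑ j : Fin (e + 1 + 1), ((e+1).choose j : ℂ) * s j *
          x₀ ^ (e + 1 - (j : ℕ)) * x₁ ^ (j : ℕ)‖ = α w ^ (e+1) * ‖g w‖ := by
    intro w
    refine ⟨((α w : ℝ) : ℂ), w * ((α w : ℝ) : ℂ), ?_, ?_⟩
    · rw [norm_mul, Complex.norm_real, Real.norm_eq_abs, abs_of_pos (hα w)]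
      have h2 := hα2 w
      have : (‖w‖ ^ 2 + 1) * α w ^ 2 = 1 := by
        rw [h2, hA_def]
        field_simp
        ring
      nlinarith [norm_nonneg w]
    · rw [hsum]
      rw [norm_mul, norm_pow, Complex.norm_real, Real.norm_eq_abs, abs_of_pos (hα w)]
  -- the compact sphere and its maximum
  set K : Set (ℂ × ℂ) := {x | ‖x.1‖ ^ 2 + ‖x.2‖ ^ 2 = 1} with hK_def
  set φ : ℂ × ℂ → ℝ := fun x => ‖∑ j : Fin (e + 1 + 1), ((e+1).choose j : ℂ) * s j *
      x.1 ^ (e + 1 - (j : ℕ)) * x.2 ^ (j : ℕ)‖ with hφ_def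
  have hφc : Continuous φ := by
    apply continuous_norm.comp
    apply continuous_finset_sum
    intro j _
    exact (continuous_const.mul (continuous_fst.pow _)).mul (continuous_snd.pow _)
  have hKc : IsCompact K := by
    have hcl : IsClosed K := by
      have : Continuous fun x : ℂ × ℂ => ‖x.1‖ ^ 2 + ‖x.2‖ ^ 2 :=
        ((continuous_norm.comp continuous_fst).pow 2).add
          ((continuous_norm.comp continuous_snd).pow 2)
      exact isClosed_eq this continuous_const
    have hbd : Bornology.IsBounded K := by
      apply (Metric.isBounded_closedBall (x := (0 : ℂ × ℂ)) (r := 1)).subset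
      intro x hx
      simp only [hK_def, Set.mem_setOf_eq] at hx
      simp only [Metric.mem_closedBall, dist_zero_right]
      rw [Prod.norm_def]
      have h1 : ‖x.1‖ ≤ 1 := by nlinarith [norm_nonneg x.1, norm_nonneg x.2]
      have h2 : ‖x.2‖ ≤ 1 := by nlinarith [norm_nonneg x.1, norm_nonneg x.2]
      exact max_le h1 h2
    exact Metric.isCompact_of_isClosed_isBounded hcl hbd
  have hK0 : ((1:ℂ), (0:ℂ)) ∈ K := by simp [hK_def]
  obtain ⟨x, hxK, hxmax'⟩ := hKc.exists_isMaxOn ⟨_, hK0⟩ hφc.continuousOn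
  have hxmax : ∀ y ∈ K, φ y ≤ φ x := fun y hy => hxmax' hy
  set m : ℝ := φ x with hm_def
  have hm0 : 0 ≤ m := norm_nonneg _
  have hub : ∀ r ∈ T1, r ≤ m := by
    rintro r ⟨x₀, x₁, hx01, rfl⟩
    exact hxmax (x₀, x₁) hx01
  have hmT1 : m ∈ T1 := ⟨x.1, x.2, hxK, rfl⟩
  have hρle : ∀ w : ℂ, α w ^ (e+1) * ‖g w‖ ≤ m := by
    intro w
    obtain ⟨x₀, x₁, hc, hv'⟩ := hval w
    rw [← hv']
    exact hub _ ⟨x₀, x₁, hc, rfl⟩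
  have hAn : ∀ y : ℂ, A y = 1 + Complex.normSq y := fun y => by
    rw [hA_def]; simp [Complex.sq_norm]
  have hAc : ∀ y : ℂ, ((A y : ℝ) : ℂ) = 1 + y * (starRingEnd ℂ) y := by
    intro y
    rw [hAn y, Complex.mul_conj]
    push_cast
    ring
  -- if the anti-fixed point equation holds at z then g z = A z * q z
  have hgcond : ∀ z : ℂ, (starRingEnd ℂ) z * q z = p z → g z = ((A z : ℝ) : ℂ) * q z := by
    intro z hz
    rw [hAc z, hgpq z]
    linear_combination (-z) * hz
  -- rpow computation for the critical value
  have hrval : ∀ z : ℂ, (starRingEnd ℂ) z * q z = p z →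
      α z ^ (e+1) * ‖g z‖
        = ‖q z‖ * (1 + ‖z‖ ^ 2) ^ (-((((e+1 : ℕ) : ℝ) - 2) / 2)) := by
    intro z hz
    rw [hgcond z hz, norm_mul, Complex.norm_real, Real.norm_eq_abs, abs_of_pos (hA z)]
    have hpow : α z ^ (e+1) * A z = (1 + ‖z‖ ^ 2) ^ (-((((e+1 : ℕ) : ℝ) - 2) / 2)) := by
      have h1 : α z ^ (e+1) = A z ^ ((-(1:ℝ)/2) * ((e+1 : ℕ) : ℝ)) := by
        rw [hα_def]
        rw [Real.rpow_mul (hA z).le, Real.rpow_natCast]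
      have h2 : A z = A z ^ (1:ℝ) := (Real.rpow_one _).symm
      rw [h1]
      nth_rewrite 2 [h2]
      rw [← Real.rpow_add (hA z)]
      rw [hA_def]
      norm_num
      ring_nf
    rw [← hpow]
    ring
  -- the maximum belongs to T2
  have hmT2 : m ∈ T2 := by
    by_cases hx1 : x.1 = 0
    · -- maximum at the "point at infinity"
      left
      have hxc : ‖x.2‖ ^ 2 = 1 := by
        have h := hxK
        simp only [hK_def, Set.mem_setOf_eq, hx1] at h
        simpa using h
      have hab : ‖x.2‖ = 1 := by nlinarith [norm_nonneg x.2]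
      have : m = ‖s (Fin.last (e+1))‖ := by
        rw [hm_def, hφ_def]
        simp only [hx1]
        rw [hzero x.2, norm_mul, norm_pow, hab]
        simp
      exact this
    · -- maximum at a finite slope z₀
      set z₀ : ℂ := x.2 / x.1 with hz₀_def
      have hb : x.2 = z₀ * x.1 := by
        rw [hz₀_def]; field_simp
      have hxc : ‖x.1‖ ^ 2 * A z₀ = 1 := by
        have h := hxK
        simp only [hK_def, Set.mem_setOf_eq] at h
        rw [hb, norm_mul] at h
        have hAz : A z₀ = 1 + ‖z₀‖ ^ 2 := rfl
        rw [hAz]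
        nlinarith [h]
      have haα : ‖x.1‖ = α z₀ := by
        have h1 : ‖x.1‖ ^ 2 = α z₀ ^ 2 := by
          rw [hα2 z₀, inv_eq_one_div, eq_div_iff (hA z₀).ne']
          exact hxc
        nlinarith [norm_nonneg x.1, hα z₀]
      have hmρ : m = α z₀ ^ (e+1) * ‖g z₀‖ := by
        have hsum' := hsum x.1 z₀
        rw [← hb] at hsum'
        rw [hm_def, hφ_def]
        simp only
        rw [hsum', norm_mul, norm_pow, haα]
      -- first-order condition at z₀
      have hkey : ∀ c : ℂ,
          2 * ((starRingEnd ℂ) (g z₀) * (c * (((e:ℂ)+1) * p z₀))).re * (1 + Complex.normSq z₀)^(e+1)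
            = Complex.normSq (g z₀) * (((e+1 : ℕ) : ℝ) * (1 + Complex.normSq z₀)^e *
                (2 * ((starRingEnd ℂ) z₀ * (c * 1)).re)) := by
        intro c
        have hN := aux_normSq_deriv g (((e:ℂ)+1) * p z₀) z₀ c (hgd z₀)
        have hM := aux_normSq_deriv id 1 z₀ c (hasDerivAt_id z₀)
        have hD := (hM.const_add 1).pow (e+1)
        simp only [id_eq, Nat.add_sub_cancel] at hD hM hN
        have hH := (hN.mul_const ((1 + Complex.normSq z₀)^(e+1))).sub
          (hD.const_mul (Complex.normSq (g z₀)))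
        simp only [Complex.ofReal_zero, zero_mul, add_zero] at hH
        -- the function has a global max at t = 0
        have hHle : ∀ t : ℝ,
            Complex.normSq (g (z₀ + ↑t * c)) * (1 + Complex.normSq z₀)^(e+1)
              - Complex.normSq (g z₀) * (1 + Complex.normSq (z₀ + ↑t * c))^(e+1) ≤ 0 := by
          intro t
          set w : ℂ := z₀ + ↑t * c with hw_def
          have h1 : α w ^ (e+1) * ‖g w‖ ≤ α z₀ ^ (e+1) * ‖g z₀‖ := by
            rw [← hmρ]; exact hρle w
          have hl : 0 ≤ α w ^ (e+1) * ‖g w‖ := by positivity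
          have h2 : (α w ^ (e+1) * ‖g w‖)^2
              ≤ (α z₀ ^ (e+1) * ‖g z₀‖)^2 := by nlinarith
          have hsq : ∀ y : ℂ, (α y ^ (e+1) * ‖g y‖)^2
              = Complex.normSq (g y) / (A y)^(e+1) := by
            intro y
            have hy : (α y ^ (e+1))^2 = ((A y)^(e+1))⁻¹ := by
              rw [← pow_mul, mul_comm (e+1) 2, pow_mul, hα2 y, inv_pow]
            calc (α y ^ (e+1) * ‖g y‖)^2
                = (α y ^ (e+1))^2 * ‖g y‖^2 := by ring
              _ = ((A y)^(e+1))⁻¹ * Complex.normSq (g y) := by rw [hy, Complex.sq_norm]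
              _ = Complex.normSq (g y) / (A y)^(e+1) := by rw [div_eq_mul_inv]; ring
          rw [hsq, hsq] at h2
          have hpw : 0 < (A w)^(e+1) := pow_pos (hA w) _
          have hpz : 0 < (A z₀)^(e+1) := pow_pos (hA z₀) _
          have h3 := (div_le_div_iff₀ hpw hpz).mp h2
          rw [hAn w, hAn z₀] at h3
          linarith
        have hmax0 : IsLocalMax (fun t : ℝ =>
            Complex.normSq (g (z₀ + ↑t * c)) * (1 + Complex.normSq z₀)^(e+1)
              - Complex.normSq (g z₀) * (1 + Complex.normSq (z₀ + ↑t * c))^(e+1)) 0 := by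
          apply Filter.Eventually.of_forall
          intro t
          have h0 : Complex.normSq (g (z₀ + ((0:ℝ):ℂ) * c)) * (1 + Complex.normSq z₀)^(e+1)
              - Complex.normSq (g z₀) * (1 + Complex.normSq (z₀ + ((0:ℝ):ℂ) * c))^(e+1) = 0 := by
            simp
          simp only [h0]
          exact hHle t
        have hd0 := hmax0.deriv_eq_zero
        replace hd0 := hd0.symm.trans hH.deriv
        linarith
      -- assemble the complex equation
      have hc1 := hkey 1
      have hcI := hkey Complex.I
      set γ : ℂ := (starRingEnd ℂ) (g z₀) * (((e:ℂ)+1) * p z₀) with hγ_def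
      set δ : ℂ := (starRingEnd ℂ) z₀ with hδ_def
      set B : ℝ := 1 + Complex.normSq z₀ with hB_def
      rw [show (starRingEnd ℂ) (g z₀) * ((1:ℂ) * (((e:ℂ)+1) * p z₀)) = γ by rw [hγ_def]; ring,
        show (starRingEnd ℂ) z₀ * ((1:ℂ) * 1) = δ by rw [hδ_def]; ring] at hc1
      rw [show (starRingEnd ℂ) (g z₀) * (Complex.I * (((e:ℂ)+1) * p z₀)) = γ * Complex.I
          by rw [hγ_def]; ring,
        show (starRingEnd ℂ) z₀ * (Complex.I * 1) = δ * Complex.I by rw [hδ_def]; ring] at hcI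
      rw [Complex.mul_I_re, Complex.mul_I_re] at hcI
      have hcplx : γ * ((B:ℝ):ℂ)^(e+1)
          = ((Complex.normSq (g z₀) : ℝ):ℂ) * ((((e+1:ℕ):ℝ):ℂ) * ((B:ℝ):ℂ)^e) * δ := by
        apply Complex.ext
        · have : ((B:ℝ):ℂ)^(e+1) = (((B^(e+1) : ℝ)):ℂ) := by push_cast; ring
          rw [this]
          have h2 : (((e+1:ℕ):ℝ):ℂ) * ((B:ℝ):ℂ)^e = (((((e+1:ℕ):ℝ) * B^e : ℝ)):ℂ) := by
            push_cast; ring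
          rw [h2]
          simp only [Complex.mul_re, Complex.mul_im, Complex.ofReal_re, Complex.ofReal_im,
            mul_zero, zero_mul, sub_zero, add_zero, zero_sub]
          nlinarith [hc1]
        · have : ((B:ℝ):ℂ)^(e+1) = (((B^(e+1) : ℝ)):ℂ) := by push_cast; ring
          rw [this]
          have h2 : (((e+1:ℕ):ℝ):ℂ) * ((B:ℝ):ℂ)^e = (((((e+1:ℕ):ℝ) * B^e : ℝ)):ℂ) := by
            push_cast; ring
          rw [h2]
          simp only [Complex.mul_re, Complex.mul_im, Complex.ofReal_re, Complex.ofReal_im,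
            mul_zero, zero_mul, sub_zero, add_zero, zero_add]
          nlinarith [hcI]
      have hBne : ((B:ℝ):ℂ) ≠ 0 := by
        simp only [ne_eq, Complex.ofReal_eq_zero]
        have : (0:ℝ) < B := by rw [hB_def]; nlinarith [Complex.normSq_nonneg z₀]
        linarith
      have hfac : γ * ((B:ℝ):ℂ) = ((Complex.normSq (g z₀) : ℝ):ℂ) * (((e:ℂ)+1)) * δ := by
        have hne : (((B:ℝ):ℂ))^e ≠ 0 := pow_ne_zero _ hBne
        apply mul_right_cancel₀ hne
        have hcast : ((((e+1:ℕ):ℝ)):ℂ) = ((e:ℂ)+1) := by push_cast; ring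
        rw [hcast] at hcplx
        calc γ * ((B:ℝ):ℂ) * ((B:ℝ):ℂ)^e = γ * ((B:ℝ):ℂ)^(e+1) := by ring
          _ = ((Complex.normSq (g z₀) : ℝ):ℂ) * (((e:ℂ)+1) * ((B:ℝ):ℂ)^e) * δ := hcplx
          _ = ((Complex.normSq (g z₀) : ℝ):ℂ) * ((e:ℂ)+1) * δ * ((B:ℝ):ℂ)^e := by ring
      -- two cases: g z₀ = 0 (degenerate, contradiction) or not
      by_cases hg0 : g z₀ = 0
      · exfalso
        have hm0' : m = 0 := by rw [hmρ, hg0]; simp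
        have hgall : ∀ w : ℂ, g w = 0 := by
          intro w
          have h1 := hρle w
          rw [hm0'] at h1
          have h2 : 0 ≤ α w ^ (e+1) * ‖g w‖ := by positivity
          have h3 : α w ^ (e+1) * ‖g w‖ = 0 := le_antisymm h1 h2
          have hαn : α w ^ (e+1) ≠ 0 := by positivity
          have h4 : ‖g w‖ = 0 := by
            rcases mul_eq_zero.mp h3 with h | h
            · exact absurd h hαn
            · exact h
          exact norm_eq_zero.mp h4
        obtain ⟨j₀, hj₀, hsj⟩ := hs
        apply hsj
        set P : Polynomial ℂ :=
          ∑ j ∈ range (e+2), Polynomial.monomial j (((e+1).choose j : ℂ) * s' j) with hP_def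
        have hPe : ∀ z, P.eval z = g z := by
          intro z
          rw [hP_def, Polynomial.eval_finset_sum, hg]
          exact Finset.sum_congr rfl fun j _ => by rw [Polynomial.eval_monomial]
        have hP0 : P = 0 := by
          apply Polynomial.funext
          intro z
          rw [hPe, hgall]
          simp
        have hco : ((e+1).choose (j₀:ℕ) : ℂ) * s' (j₀:ℕ) = 0 := by
          have h := Polynomial.ext_iff.mp hP0 (j₀:ℕ)
          rw [hP_def, Polynomial.finset_sum_coeff] at h
          simp only [Polynomial.coeff_monomial, Polynomial.coeff_zero] at h
          rwa [Finset.sum_ite_eq' (range (e+2)) ((j₀:ℕ))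
            (fun j => ((e+1).choose j : ℂ) * s' j), if_pos (Finset.mem_range.mpr j₀.isLt)] at h
        have hch : ((e+1).choose (j₀:ℕ) : ℂ) ≠ 0 := by
          have : 0 < (e+1).choose (j₀:ℕ) :=
            Nat.choose_pos (by omega)
          exact_mod_cast this.ne'
        have := (mul_eq_zero.mp hco).resolve_left hch
        rw [hs'' j₀]
        exact this
      · -- nondegenerate case: z₀ is an anti-fixed point
        right
        have hgc : (starRingEnd ℂ) (g z₀) ≠ 0 := by
          simpa using hg0
        have hene : ((e:ℂ)+1) ≠ 0 := by
          have : ((e:ℂ)+1) = ((e+1:ℕ):ℂ) := by push_cast; ring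
          rw [this]
          exact Nat.cast_ne_zero.mpr (Nat.succ_ne_zero e)
        have hNc : ((Complex.normSq (g z₀) : ℝ):ℂ) = g z₀ * (starRingEnd ℂ) (g z₀) := by
          rw [← Complex.mul_conj]
        have hpB : p z₀ * ((B:ℝ):ℂ) = g z₀ * δ := by
          have h5 : (starRingEnd ℂ) (g z₀) * (((e:ℂ)+1) * (p z₀ * ((B:ℝ):ℂ)))
              = (starRingEnd ℂ) (g z₀) * (((e:ℂ)+1) * (g z₀ * δ)) := by
            rw [hγ_def] at hfac
            rw [hNc] at hfac
            linear_combination hfac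
          exact mul_left_cancel₀ hene (mul_left_cancel₀ hgc h5)
        have hBc : ((B:ℝ):ℂ) = 1 + z₀ * δ := by
          rw [hB_def, hδ_def]
          push_cast
          rw [Complex.mul_conj]
        have hcond : (starRingEnd ℂ) z₀ * q z₀ = p z₀ := by
          have h6 := hpB
          rw [hBc, hgpq z₀, hδ_def] at h6
          linear_combination -h6
        refine ⟨z₀, hcond, ?_⟩
        rw [hmρ, hrval z₀ hcond]
  -- T2 is a subset of T1
  have hT2sub : T2 ⊆ T1 := by
    rintro r (hr | ⟨z, hz, rfl⟩)
    · rw [Set.mem_singleton_iff] at hr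
      subst hr
      refine ⟨0, 1, by simp, ?_⟩
      rw [hzero 1]
      simp
    · obtain ⟨x₀, x₁, hc, hv'⟩ := hval z
      refine ⟨x₀, x₁, hc, ?_⟩
      rw [hv', hrval z hz]
  -- conclusion
  have hbdd : BddAbove T1 := ⟨m, fun r hr => hub r hr⟩
  have h1 : sSup T1 = m := le_antisymm (csSup_le ⟨m, hmT1⟩ hub) (le_csSup hbdd hmT1)
  have h2 : sSup T2 = m :=
    le_antisymm (csSup_le ⟨_, Set.mem_union_left _ rfl⟩ fun r hr => hub r (hT2sub hr))
      (le_csSup (hbdd.mono hT2sub) hmT2)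
  rw [h1, h2]
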